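/- Fix constants 0 < c_1 ≤ c_2 ≤ c_3 and consider maximizing f(w_1, w_2, w_3) = w_1 w_2 w_3 (c_1 w_2 w_3 + c_2 w_1 w_3 + c_3 w_1 w_2) over the simplex {w_i ≥ 0, w_1 + w_2 + w_3 = 1}. Then the maximizer is the uniform allocation w_1 = w_2 = w_3 = 1/3 if and only if c_1 = c_2 = c_3. -/

import Mathlib

theorem uniform_maximizer_iff_equal_coefficients
    (c₁ c₂ c₃ : ℝ) (h₁ : 0 < c₁) (h₁₂ : c₁ ≤ c₂) (h₂₃ : c₂ ≤ c₃) :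
    (∀ w₁ w₂ w₃ : ℝ, 0 ≤ w₁ → 0 ≤ w₂ → 0 ≤ w₃ → w₁ + w₂ + w₃ = 1 →
        w₁ * w₂ * w₃ * (c₁ * w₂ * w₃ + c₂ * w₁ * w₃ + c₃ * w₁ * w₂) ≤
          (1/3) * (1/3) * (1/3) *
            (c₁ * (1/3) * (1/3) + c₂ * (1/3) * (1/3) + c₃ * (1/3) * (1/3)))
      ↔ (c₁ = c₂ ∧ c₂ = c₃) := by
  have hc₂ : 0 < c₂ := lt_of_lt_of_le h₁ h₁₂
  have hc₃ : 0 < c₃ := lt_of_lt_of_le hc₂ h₂₃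
  constructor
  · intro h
    constructor
    · by_contra hne
      have hs : 0 < c₂ - c₁ := sub_pos.mpr (lt_of_le_of_ne h₁₂ hne)
      set M : ℝ := c₂ + c₃ with hM
      have hMpos : 0 < M := by positivity
      set t : ℝ := (c₂ - c₁) / (12 * M) with htdef
      have ht : 0 < t := div_pos hs (by positivity)
      have hts : 12 * M * t = c₂ - c₁ := by
        rw [htdef, mul_div_assoc', mul_comm, mul_div_assoc, div_self (mul_pos (by norm_num) hMpos).ne', mul_one]
      have htM : c₂ - c₁ ≤ M := by linarith [h₁.le, hc₃.le]
      have ht3 : t ≤ 1/3 := by nlinarith [hts, hMpos]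
      have key := h (1/3 + t) (1/3 - t) (1/3)
        (by linarith) (by linarith) (by norm_num) (by ring)
      have h2 : 12 * M * t * t = (c₂ - c₁) * t := by rw [hts]
      nlinarith [key, h2, mul_pos hs ht,
        mul_nonneg (mul_nonneg hs.le (mul_self_nonneg t)) (show (0:ℝ) ≤ 1/3 - t by linarith),
        mul_nonneg hc₃.le (pow_nonneg ht.le 4)]
    · by_contra hne
      have hs : 0 < c₃ - c₂ := sub_pos.mpr (lt_of_le_of_ne h₂₃ hne)
      set M : ℝ := c₁ + c₃ with hM
      have hMpos : 0 < M := by positivity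
      set t : ℝ := (c₃ - c₂) / (12 * M) with htdef
      have ht : 0 < t := div_pos hs (by positivity)
      have hts : 12 * M * t = c₃ - c₂ := by
        rw [htdef, mul_div_assoc', mul_comm, mul_div_assoc, div_self (mul_pos (by norm_num) hMpos).ne', mul_one]
      have htM : c₃ - c₂ ≤ M := by linarith [h₁.le, hc₂.le]
      have ht3 : t ≤ 1/3 := by nlinarith [hts, hMpos]
      have key := h (1/3) (1/3 + t) (1/3 - t)
        (by norm_num) (by linarith) (by linarith) (by ring)
      have h2 : 12 * M * t * t = (c₃ - c₂) * t := by rw [hts]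
      nlinarith [key, h2, mul_pos hs ht,
        mul_nonneg (mul_nonneg hs.le (mul_self_nonneg t)) (show (0:ℝ) ≤ 1/3 - t by linarith),
        mul_nonneg h₁.le (pow_nonneg ht.le 4)]
  · rintro ⟨rfl12, rfl23⟩
    subst rfl12; subst rfl23
    intro w₁ w₂ w₃ hw1 hw2 hw3 hsum
    have hq : w₂ * w₃ + w₁ * w₃ + w₁ * w₂ ≤ 1/3 := by
      nlinarith [sq_nonneg (w₁ - w₂), sq_nonneg (w₂ - w₃), sq_nonneg (w₁ - w₃)]
    have hq0 : 0 ≤ w₂ * w₃ + w₁ * w₃ + w₁ * w₂ := by positivity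
    have hp : w₁ * w₂ * w₃ ≤ 1/27 := by
      nlinarith [mul_nonneg hw3 (sq_nonneg (w₁ - w₂)), mul_nonneg hw1 (sq_nonneg (w₂ - w₃)),
        mul_nonneg hw2 (sq_nonneg (w₁ - w₃)), sq_nonneg (w₁ - w₂), sq_nonneg (w₂ - w₃),
        sq_nonneg (w₁ - w₃)]
    have hp0 : 0 ≤ w₁ * w₂ * w₃ := by positivity
    have hpq : w₁ * w₂ * w₃ * (w₂ * w₃ + w₁ * w₃ + w₁ * w₂) ≤ (1/27) * (1/3) :=
      mul_le_mul hp hq hq0 (by norm_num)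
    nlinarith [mul_le_mul_of_nonneg_left hpq h₁.le]
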